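/- Let a_0, a_1, a_2, a_3 be nonnegative integers satisfying a_{i} + a_{i+2} ≥ a_{i+1} for i = −1, 0, 1, 2 (with a_{−1} = a_4 = 0), and suppose a_0 + a_2 > a_1 + a_3. Then every maximizer (r_1, r_2, r_3) of d(a, r) = Σ_{i=1}^3 r_i(a_i + a_{i−1} − r_{i−1} − r_i) (with r_0 = r_4 = 0) over the feasible region {r ∈ ℤ_{≥0}³ : r_i + r_{i+1} ≤ a_i for i = 0,...,3} satisfies r_3 = a_3 and r_1 + r_2 = a_1. -/
import Mathlib


/-- The dimension of the variety of length-3 chain complexes with ranks `(r₁, r₂, r₃)`. -/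
def d3 (a₀ a₁ a₂ a₃ : ℕ) (r : ℤ × ℤ × ℤ) : ℤ :=
  r.1 * ((a₁ : ℤ) + a₀ - r.1) + r.2.1 * ((a₂ : ℤ) + a₁ - r.1 - r.2.1) +
    r.2.2 * ((a₃ : ℤ) + a₂ - r.2.1 - r.2.2)

/-- Feasibility of the rank vector `(r₁, r₂, r₃)`. -/
def feas3 (a₀ a₁ a₂ a₃ : ℕ) (r : ℤ × ℤ × ℤ) : Prop :=
  0 ≤ r.1 ∧ 0 ≤ r.2.1 ∧ 0 ≤ r.2.2 ∧
    r.1 ≤ a₀ ∧ r.1 + r.2.1 ≤ a₁ ∧ r.2.1 + r.2.2 ≤ a₂ ∧ r.2.2 ≤ a₃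

/-- Length 3, case `a₀ + a₂ > a₁ + a₃`: under the hypotheses
`a_i + a_{i+2} ≥ a_{i+1}` for `i = -1, 0, 1, 2` (with `a_{-1} = a₄ = 0`),
every maximizer of `d3` over the feasible region satisfies
`r₃ = a₃` and `r₁ + r₂ = a₁`. -/
theorem stmt9 (a₀ a₁ a₂ a₃ : ℕ)
    (hm1 : a₀ ≤ a₁) (h0 : a₁ ≤ a₀ + a₂) (h1 : a₂ ≤ a₁ + a₃) (h2 : a₃ ≤ a₂)
    (hcase : a₁ + a₃ < a₀ + a₂) :
    ∀ r : ℤ × ℤ × ℤ, feas3 a₀ a₁ a₂ a₃ r →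
      (∀ s : ℤ × ℤ × ℤ, feas3 a₀ a₁ a₂ a₃ s →
        d3 a₀ a₁ a₂ a₃ s ≤ d3 a₀ a₁ a₂ a₃ r) →
      r.2.2 = (a₃ : ℤ) ∧ r.1 + r.2.1 = (a₁ : ℤ) := by
  intro r hf hmax
  obtain ⟨x, y, z⟩ := r
  obtain ⟨hx0, hy0, hz0, hxa, hxy, hyz, hza⟩ := hf
  simp only at hx0 hy0 hz0 hxa hxy hyz hza ⊢
  -- Move A : (x, y, z+1)
  have hA : ¬ (y + (z + 1) ≤ (a₂ : ℤ) ∧ z + 1 ≤ (a₃ : ℤ)) := by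
    rintro ⟨hs2, hs3⟩
    have := hmax (x, y, z + 1) (by simp only [feas3]; omega)
    simp only [d3] at this
    nlinarith [this]
  -- Move B : (x, y+1, z)
  have hB : ¬ (x + (y + 1) ≤ (a₁ : ℤ) ∧ (y + 1) + z ≤ (a₂ : ℤ)) := by
    rintro ⟨hs1, hs2⟩
    have := hmax (x, y + 1, z) (by simp only [feas3]; omega)
    simp only [d3] at this
    nlinarith [this]
  -- Move E : (x+1, y, z)
  have hE : ¬ ((x + 1) + y ≤ (a₁ : ℤ) ∧ x + 1 ≤ (a₀ : ℤ)) := by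
    rintro ⟨hs1, hs0⟩
    have := hmax (x + 1, y, z) (by simp only [feas3]; omega)
    simp only [d3] at this
    nlinarith [this]
  -- Move H : (x+1, y-1, z+1)
  have hH : ¬ (z + 1 ≤ (a₃ : ℤ) ∧ x + 1 ≤ (a₀ : ℤ) ∧ 1 ≤ y) := by
    rintro ⟨hs3, hs0, hy1⟩
    have := hmax (x + 1, y - 1, z + 1) (by simp only [feas3]; omega)
    simp only [d3] at this
    nlinarith [this]
  -- First: x + y = a₁
  have key1 : x + y = (a₁ : ℤ) := by
    by_contra hne
    have hlt : x + y + 1 ≤ (a₁ : ℤ) := by omega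
    have hyz' : y + z = (a₂ : ℤ) := by
      by_contra h
      exact hB ⟨by omega, by omega⟩
    have hx' : x = (a₀ : ℤ) := by
      by_contra h
      exact hE ⟨by omega, by omega⟩
    omega
  refine ⟨?_, key1⟩
  -- Second: z = a₃
  by_contra hne
  have hlt : z + 1 ≤ (a₃ : ℤ) := by omega
  have hyz' : y + z = (a₂ : ℤ) := by
    by_contra h
    exact hA ⟨by omega, by omega⟩
  have hy1 : 1 ≤ y := by omega
  have hx : x + 1 ≤ (a₀ : ℤ) := by omega
  exact hH ⟨hlt, hx, hy1⟩
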